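/- Let k be an integer with k ∉ {0,1}, and let S be an open neighborhood of I_n in D_n(ℂ) consisting of invertible matrices. A linear bijection ψ : D_n(ℂ) → D_n(ℂ) satisfies ψ(A^k) = ψ(A)^k for all A ∈ S if and only if there exist a diagonal matrix C ∈ D_n(ℂ) with C^{k-1} = I_n and a permutation matrix P ∈ M_n(ℂ) such that ψ(A) = PCAP⁻¹ for all A ∈ D_n(ℂ). -/

import Mathlib

open Matrix
open Polynomial

lemma aux_inf {ε : ℝ} (hε : 0 < ε) : {t : ℂ | ‖t‖ < ε ∧ t ≠ -1}.Infinite := by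
  have h1 : (Set.Ioo (0:ℝ) (min ε 1)).Infinite := Set.Ioo_infinite (by simp [hε])
  have h2 : Set.InjOn (fun r : ℝ => (r : ℂ)) (Set.Ioo 0 (min ε 1)) :=
    fun a _ b _ h => Complex.ofReal_injective h
  refine (h1.image h2).mono ?_
  rintro _ ⟨r, ⟨hr0, hr1⟩, rfl⟩
  constructor
  · simpa [Complex.norm_real, abs_of_pos hr0] using lt_of_lt_of_le hr1 (min_le_left _ _)
  · intro h
    rw [show (-1 : ℂ) = ((-1 : ℝ) : ℂ) by norm_num] at h
    have := Complex.ofReal_injective h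
    linarith

lemma key_pos (K : ℕ) (hK : 2 ≤ K) {E N : ℂ} (hN : N ≠ 0) {ε : ℝ} (hε : 0 < ε)
    (H : ∀ t : ℂ, ‖t‖ < ε → t ≠ -1 → E + ((1+t)^K - 1) * N = (E + t*N)^K) :
    N = E ∧ E ^ (K-1) = 1 := by
  set P : Polynomial ℂ := C E + ((1+X)^K - 1) * C N with hP
  set Q : Polynomial ℂ := (C E + X * C N)^K with hQ
  have hPQ : P = Q := by
    apply eq_of_infinite_eval_eq
    apply (aux_inf hε).mono
    rintro t ⟨ht, ht1⟩
    simp only [Set.mem_setOf_eq, hP, hQ, eval_add, eval_mul, eval_pow, eval_sub, eval_C, eval_X,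
      eval_one]
    exact H t ht ht1
  have hD := congrArg derivative hPQ
  have h0 := congrArg (eval 0) hD
  have h1 := congrArg (eval (-1)) hD
  simp only [hP, hQ, derivative_add, derivative_C, derivative_mul, derivative_sub, derivative_one,
    derivative_pow, derivative_X, eval_add, eval_mul, eval_pow, eval_sub, eval_C, eval_X,
    eval_one, eval_natCast, zero_add, add_zero, mul_one, mul_zero, zero_mul, sub_zero] at h0 h1
  have hKne : (K:ℂ) ≠ 0 := Nat.cast_ne_zero.mpr (by omega)
  have hK1 : K - 1 ≠ 0 := by omega
  rw [one_pow, mul_one] at h0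
  have hE : E ^ (K-1) = 1 := by
    rw [one_mul] at h0
    have h0' : (K:ℂ) * N = ((K:ℂ) * E ^ (K-1)) * N := by linear_combination h0
    have := mul_right_cancel₀ hN h0'
    field_simp at this
    exact this.symm
  refine ⟨?_, hE⟩
  rw [show (1:ℂ) + -1 = 0 by ring, zero_pow hK1, mul_zero, zero_mul, one_mul] at h1
  have h2 : (E + -1 * N) ^ (K - 1) = 0 := by
    rcases mul_eq_zero.mp h1.symm with h | h
    · rcases mul_eq_zero.mp h with h | h
      · exact absurd h hKne
      · exact h
    · exact absurd h hN
  have := pow_eq_zero_iff hK1 |>.mp h2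
  have : E = N := by linear_combination this
  exact this.symm

lemma key_neg (m : ℕ) (hm : 0 < m) {E N : ℂ} (hN : N ≠ 0) {ε : ℝ} (hε : 0 < ε)
    (H : ∀ t : ℂ, ‖t‖ < ε → t ≠ -1 → ((E - N)*(1+t)^m + N) * (E + t*N)^m = (1+t)^m) :
    N = E ∧ E ^ (m+1) = 1 := by
  set P : Polynomial ℂ := (C (E - N) * (1+X)^m + C N) * (C E + X * C N)^m with hP
  set Q : Polynomial ℂ := (1+X)^m with hQ
  have hPQ : P = Q := by
    apply eq_of_infinite_eval_eq
    apply (aux_inf hε).mono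
    rintro t ⟨ht, ht1⟩
    simp only [Set.mem_setOf_eq, hP, hQ, eval_add, eval_mul, eval_pow, eval_C, eval_X, eval_one]
    exact H t ht ht1
  have h0 := congrArg (eval 0) hPQ
  have h1 := congrArg (eval (-1)) hPQ
  simp only [hP, hQ, eval_add, eval_mul, eval_pow, eval_C, eval_X, eval_one, add_zero, mul_zero,
    mul_one, one_pow] at h0 h1
  rw [show (1:ℂ) + -1 = 0 by ring, zero_pow hm.ne'] at h1
  rw [mul_zero, zero_add] at h1
  have hEN : E = N := by
    have h2 : (E + -1 * N) ^ m = 0 := by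
      rcases mul_eq_zero.mp h1 with h | h
      · exact absurd h hN
      · exact h
    have := pow_eq_zero_iff hm.ne' |>.mp h2
    linear_combination this
  refine ⟨hEN.symm, ?_⟩
  have h0' : E * E ^ m = 1 := by
    rw [sub_add_cancel, zero_mul, add_zero] at h0
    exact h0
  rw [pow_succ]
  linear_combination h0'

lemma key (k : ℤ) (hk0 : k ≠ 0) (hk1 : k ≠ 1) {E N : ℂ} (hN : N ≠ 0) {ε : ℝ} (hε : 0 < ε)
    (H : ∀ t : ℂ, ‖t‖ < ε → t ≠ -1 →
      E + ((1+t)^k - 1) * N = (E + t*N)^k ∧ (k < 0 → E + t*N ≠ 0)) :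
    N = E ∧ E ^ (k-1) = 1 := by
  rcases lt_or_ge k 0 with hneg | hpos
  · obtain ⟨m, rfl⟩ : ∃ m : ℕ, k = -(m:ℤ) := ⟨k.natAbs, by omega⟩
    have hm : 0 < m := by omega
    have H' : ∀ t : ℂ, ‖t‖ < ε → t ≠ -1 →
        ((E - N)*(1+t)^m + N) * (E + t*N)^m = (1+t)^m := by
      intro t ht ht1
      obtain ⟨h1, h2⟩ := H t ht ht1
      have hw : E + t*N ≠ 0 := h2 hneg
      have hu : (1:ℂ) + t ≠ 0 := by
        intro h; exact ht1 (by linear_combination h)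
      rw [_root_.zpow_neg, _root_.zpow_neg, zpow_natCast, zpow_natCast] at h1
      have hum : ((1:ℂ)+t)^m ≠ 0 := pow_ne_zero _ hu
      have hwm : (E + t*N)^m ≠ 0 := pow_ne_zero _ hw
      field_simp at h1
      linear_combination h1
    obtain ⟨hNE, hE⟩ := key_neg m hm hN hε H'
    refine ⟨hNE, ?_⟩
    have h : -(m:ℤ) - 1 = -((m+1 : ℕ) : ℤ) := by push_cast; ring
    rw [h, _root_.zpow_neg, zpow_natCast, hE, inv_one]
  · obtain ⟨K, rfl⟩ : ∃ K : ℕ, k = (K:ℤ) := ⟨k.toNat, by omega⟩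
    have hK : 2 ≤ K := by omega
    have H' : ∀ t : ℂ, ‖t‖ < ε → t ≠ -1 →
        E + ((1+t)^K - 1) * N = (E + t*N)^K := by
      intro t ht ht1
      have := (H t ht ht1).1
      rwa [zpow_natCast, zpow_natCast] at this
    obtain ⟨hNE, hE⟩ := key_pos K hK hN hε H'
    refine ⟨hNE, ?_⟩
    have h : (K:ℤ) - 1 = ((K-1 : ℕ) : ℤ) := by omega
    rw [h, zpow_natCast, hE]

lemma diag_zpow {n : ℕ} (d : Fin n → ℂ) (hd : ∀ p, d p ≠ 0) (k : ℤ) :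
    Matrix.diagonal d ^ k = Matrix.diagonal (fun p => d p ^ k) := by
  obtain ⟨K, rfl | rfl⟩ := Int.eq_nat_or_neg k
  · rw [zpow_natCast, diagonal_pow]
    congr 1
  · rw [zpow_neg_natCast, diagonal_pow]
    have h : Matrix.diagonal (d ^ K) * Matrix.diagonal (fun p => d p ^ (-(K:ℤ))) = 1 := by
      rw [diagonal_mul_diagonal]
      have h2 : (fun p => (d ^ K) p * d p ^ (-(K:ℤ))) = fun _ => (1:ℂ) := by
        funext p
        rw [_root_.zpow_neg, zpow_natCast, Pi.pow_apply,
          mul_inv_cancel₀ (pow_ne_zero _ (hd p))]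
      rw [h2, diagonal_one]
    exact inv_eq_right_inv h

lemma perm_conj {n : ℕ} (σ : Equiv.Perm (Fin n)) (v : Fin n → ℂ) :
    (σ.permMatrix ℂ) * Matrix.diagonal v * (σ.permMatrix ℂ)⁻¹ =
      Matrix.diagonal (fun i => v (σ i)) := by
  have h1 : (σ.permMatrix ℂ) * Matrix.diagonal v
      = Matrix.diagonal (fun i => v (σ i)) * σ.permMatrix ℂ := by
    ext i j
    rw [mul_diagonal, diagonal_mul]
    simp only [Equiv.Perm.permMatrix, PEquiv.toMatrix_apply, Equiv.toPEquiv_apply,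
      Option.mem_def, Option.some.injEq]
    by_cases h : σ i = j
    · subst h; simp
    · simp [h]
  have h2 : (σ.permMatrix ℂ) * (σ.permMatrix ℂ)⁻¹ = 1 := by
    apply mul_nonsing_inv
    rw [det_permutation]
    rcases Int.units_eq_one_or (Equiv.Perm.sign σ) with h | h <;> rw [h] <;> simp
  rw [h1, mul_assoc, h2, mul_one]

/-- A linear bijection of the diagonal matrices `D_n(ℂ)` preserves `k`-th
powers on an open invertible neighborhood of `I` in `D_n(ℂ)` iff it has the form
`ψ(A) = P C A P⁻¹` for a diagonal `C` with `C^(k-1) = 1` and a permutation matrix `P`. -/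
theorem stmt_16 (n : ℕ) (k : ℤ) (hk0 : k ≠ 0) (hk1 : k ≠ 1)
    (S : Set (Matrix (Fin n) (Fin n) ℂ))
    (hSopen : ∃ U : Set (Matrix (Fin n) (Fin n) ℂ), IsOpen U ∧
      S = U ∩ {A : Matrix (Fin n) (Fin n) ℂ | A.IsDiag})
    (hS1 : 1 ∈ S) (hSinv : ∀ A ∈ S, IsUnit A)
    (ψ : Matrix (Fin n) (Fin n) ℂ → Matrix (Fin n) (Fin n) ℂ)
    (hψlin : IsLinearMap ℂ ψ)
    (hψdiag : ∀ A : Matrix (Fin n) (Fin n) ℂ, A.IsDiag → (ψ A).IsDiag)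
    (hψinj : ∀ A B : Matrix (Fin n) (Fin n) ℂ, A.IsDiag → B.IsDiag → ψ A = ψ B → A = B)
    (hψsurj : ∀ B : Matrix (Fin n) (Fin n) ℂ, B.IsDiag → ∃ A, A.IsDiag ∧ ψ A = B) :
    (∀ A ∈ S, ψ (A ^ k) = ψ A ^ k) ↔
    ∃ (C P : Matrix (Fin n) (Fin n) ℂ) (σ : Equiv.Perm (Fin n)),
      C.IsDiag ∧ C ^ (k - 1) = 1 ∧ P = σ.permMatrix ℂ ∧
      ∀ A : Matrix (Fin n) (Fin n) ℂ, A.IsDiag → ψ A = P * C * A * P⁻¹ := by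
  rcases Nat.eq_zero_or_pos n with hn | hn
  · subst hn
    have hsub : ∀ (A B : Matrix (Fin 0) (Fin 0) ℂ), A = B := by
      intro A B; ext i j; exact isEmptyElim i
    constructor
    · intro _
      exact ⟨1, 1, 1, isDiag_one, hsub _ _, hsub _ _, fun A _ => hsub _ _⟩
    · intro _ A _
      exact hsub _ _
  haveI : Nonempty (Fin n) := ⟨⟨0, hn⟩⟩
  obtain ⟨U, hUopen, hSU⟩ := hSopen
  have hSdiag : ∀ A ∈ S, A.IsDiag := fun A hA => by rw [hSU] at hA; exact hA.2
  have hSentries : ∀ A ∈ S, ∀ p, A.diag p ≠ 0 := by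
    intro A hA p h0
    have hu := hSinv A hA
    have hd : A = diagonal A.diag := ((hSdiag A hA).diagonal_diag).symm
    rw [hd, Matrix.isUnit_iff_isUnit_det, det_diagonal, isUnit_iff_ne_zero] at hu
    exact hu (Finset.prod_eq_zero (Finset.mem_univ p) h0)
  constructor
  · -- forward direction
    intro hpow
    set M : Fin n → Fin n → ℂ := fun i j => (ψ (diagonal (Pi.single j 1))).diag i with hM
    have hψ0 : ψ 0 = 0 := hψlin.map_zero
    -- ψ acts on diagonals through M
    have hψd : ∀ d : Fin n → ℂ,
        ψ (diagonal d) = diagonal (fun i => ∑ j, M i j * d j) := by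
      intro d
      have hdec : diagonal d = ∑ j, d j • diagonal (Pi.single j 1) := by
        ext i i'
        simp only [Matrix.sum_apply, Matrix.smul_apply, diagonal_apply, smul_eq_mul]
        by_cases h : i = i'
        · subst h
          simp [Pi.single_apply]
        · simp [h]
      have hmsum := map_sum (IsLinearMap.mk' ψ hψlin)
        (fun j => d j • diagonal (Pi.single j 1)) Finset.univ
      simp only [_root_.map_smul, IsLinearMap.mk'_apply] at hmsum
      rw [hdec, hmsum]
      ext i i'
      simp only [Matrix.sum_apply, Matrix.smul_apply, smul_eq_mul]
      by_cases h : i = i'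
      · subst h
        rw [diagonal_apply_eq]
        exact Finset.sum_congr rfl fun j _ => mul_comm _ _
      · rw [diagonal_apply_ne _ h]
        exact Finset.sum_eq_zero fun j _ => by
          rw [(hψdiag _ (isDiag_diagonal _)) h, mul_zero]
    -- neighborhood ball
    obtain ⟨ε, hε, hball⟩ : ∃ ε > 0, ∀ a : Fin n → ℂ,
        (∀ p, dist (a p) 1 < ε) → diagonal a ∈ S := by
      have hcont : Continuous fun a : Fin n → ℂ => Matrix.diagonal a :=
        continuous_id.matrix_diagonal
      have hopen : IsOpen ((fun a : Fin n → ℂ => Matrix.diagonal a) ⁻¹' U) :=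
        hUopen.preimage hcont
      have h1mem : (fun _ => (1:ℂ)) ∈ ((fun a : Fin n → ℂ => Matrix.diagonal a) ⁻¹' U) := by
        have : (1 : Matrix (Fin n) (Fin n) ℂ) ∈ U := by
          rw [hSU] at hS1; exact hS1.1
        simpa [Matrix.diagonal_one] using this
      obtain ⟨ε, hε, hsubb⟩ := Metric.isOpen_iff.mp hopen _ h1mem
      refine ⟨ε, hε, fun a ha => ?_⟩
      have hmem : a ∈ Metric.ball (fun _ => (1:ℂ)) ε := by
        rw [Metric.mem_ball, dist_pi_lt_iff hε]
        exact ha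
      rw [hSU]
      exact ⟨hsubb hmem, isDiag_diagonal a⟩
    -- negative k : no vanishing
    have hW : k < 0 → ∀ a : Fin n → ℂ, (∀ p, dist (a p) 1 < ε) →
        ∀ i, (∑ j, M i j * a j) ≠ 0 := by
      intro hk a ha i h0
      have hAS := hball a ha
      have ha0 : ∀ p, a p ≠ 0 := by
        intro p
        have := hSentries _ hAS p
        simpa using this
      have hψA := hψd a
      have hdet : ¬ IsUnit (ψ (diagonal a)).det := by
        rw [hψA, det_diagonal, isUnit_iff_ne_zero, not_not]
        exact Finset.prod_eq_zero (Finset.mem_univ i) h0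
      have hzp : ψ (diagonal a) ^ k = 0 := by
        obtain ⟨m, hm⟩ : ∃ m : ℕ, k = -(m:ℤ) := ⟨k.natAbs, by omega⟩
        rw [hm, Matrix.zpow_neg_natCast]
        apply nonsing_inv_apply_not_isUnit
        rw [det_pow]
        intro hh
        exact hdet (isUnit_pow_iff (by omega : m ≠ 0) |>.mp hh)
      have hpow' := hpow (diagonal a) hAS
      rw [diag_zpow a ha0 k, hzp] at hpow'
      have heq := hψinj _ 0 (isDiag_diagonal _) isDiag_zero (by rw [hpow', hψ0])
      obtain ⟨i0⟩ := ‹Nonempty (Fin n)›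
      have h1 : (a i0) ^ k = 0 := by
        have := congrFun (congrFun heq i0) i0
        simpa using this
      exact zpow_ne_zero _ (ha0 i0) h1
    -- entrywise power identity
    have hid : ∀ a : Fin n → ℂ, (∀ p, dist (a p) 1 < ε) → (∀ p, a p ≠ 0) → ∀ i,
        ∑ j, M i j * (a j) ^ k = (∑ j, M i j * a j) ^ k := by
      intro a ha ha0 i
      have hAS := hball a ha
      have hpow' := hpow (diagonal a) hAS
      rw [diag_zpow a ha0 k, hψd, hψd] at hpow'
      have hRHS : (diagonal (fun p => ∑ j, M p j * a j) : Matrix (Fin n) (Fin n) ℂ) ^ k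
          = diagonal (fun p => (∑ j, M p j * a j) ^ k) := by
        rcases lt_or_ge k 0 with hneg | hpos
        · exact diag_zpow _ (hW hneg a ha) k
        · obtain ⟨K, hK⟩ : ∃ K : ℕ, k = (K:ℤ) := ⟨k.toNat, by omega⟩
          rw [hK, zpow_natCast, diagonal_pow]
          congr 1
      rw [hRHS] at hpow'
      have := congrFun (congrFun hpow' i) i
      simpa using this
    -- sum over a "bumped" vector
    have hsum : ∀ (s : Finset (Fin n)) (i : Fin n) (x : ℂ),
        (∑ j, M i j * (if j ∈ s then x else 1)) = (∑ j, M i j) + (x - 1) * ∑ j ∈ s, M i j := by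
      intro s i x
      have h : ∀ j, M i j * (if j ∈ s then x else 1)
          = M i j + (if j ∈ s then (x-1) * M i j else 0) := by
        intro j
        by_cases h : j ∈ s
        · simp [h]; ring
        · simp [h]
      rw [Finset.sum_congr rfl (fun j _ => h j), Finset.sum_add_distrib]
      congr 1
      rw [Finset.sum_ite_mem, Finset.univ_inter, Finset.mul_sum]
    set E : Fin n → ℂ := fun i => ∑ j, M i j with hE
    have hKey : ∀ (i : Fin n) (s : Finset (Fin n)), (∑ j ∈ s, M i j) ≠ 0 →
        (∑ j ∈ s, M i j) = E i ∧ (E i) ^ (k-1) = 1 := by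
      intro i s hNs
      apply key k hk0 hk1 hNs hε
      intro t ht ht1
      have hu : (1:ℂ) + t ≠ 0 := fun h => ht1 (by linear_combination h)
      set a : Fin n → ℂ := fun p => if p ∈ s then 1+t else 1 with ha
      have hab : ∀ p, dist (a p) 1 < ε := by
        intro p
        simp only [ha]
        split
        · simpa [Complex.dist_eq] using ht
        · simpa using hε
      have ha0 : ∀ p, a p ≠ 0 := by
        intro p
        simp only [ha]
        split
        exacts [hu, one_ne_zero]
      have h1 : ∑ j, M i j * a j = E i + t * (∑ j ∈ s, M i j) := by
        simp only [ha]
        rw [hsum]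
        ring_nf
        exact add_comm _ _
      have h2 : ∑ j, M i j * (a j) ^ k = E i + ((1+t)^k - 1) * (∑ j ∈ s, M i j) := by
        have hexp : ∀ j, (a j) ^ k = if j ∈ s then (1+t)^k else 1 := by
          intro j
          simp only [ha]
          split
          · rfl
          · exact one_zpow k
        rw [Finset.sum_congr rfl (fun j _ => by rw [hexp j]), hsum]
      constructor
      · rw [← h1, ← h2]
        exact hid a hab ha0 i
      · intro hkneg
        rw [← h1]
        exact hW hkneg a hab i
    have hone : ∀ i l, M i l ≠ 0 → M i l = E i ∧ (E i)^(k-1) = 1 := by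
      intro i l h
      have := hKey i {l} (by simpa using h)
      simpa using this
    have hEne : ∀ i l, M i l ≠ 0 → E i ≠ 0 := by
      intro i l h hE0
      have h2 := (hone i l h).2
      rw [hE0, _root_.zero_zpow _ (by omega : k - 1 ≠ 0)] at h2
      exact zero_ne_one h2
    have huniq : ∀ i j l, M i j ≠ 0 → M i l ≠ 0 → j = l := by
      intro i j l hj hl
      by_contra hne
      have hsum2 : ∑ p ∈ ({j,l} : Finset (Fin n)), M i p = M i j + M i l :=
        Finset.sum_pair hne
      have hE0 := hEne i j hj
      have h2E : ∑ p ∈ ({j,l} : Finset (Fin n)), M i p = 2 * E i := by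
        rw [hsum2, (hone i j hj).1, (hone i l hl).1]; ring
      have h3 := (hKey i {j,l} (by rw [h2E]; exact mul_ne_zero two_ne_zero hE0)).1
      rw [h2E] at h3
      exact hE0 (by linear_combination h3)
    have hex : ∀ i, ∃ l, M i l ≠ 0 := by
      intro i
      by_contra h
      push_neg at h
      obtain ⟨A, hA, hAeq⟩ := hψsurj (diagonal (Pi.single i 1)) (isDiag_diagonal _)
      rw [← hA.diagonal_diag, hψd] at hAeq
      have hc := congrFun (congrFun hAeq i) i
      simp only [diagonal_apply_eq] at hc
      rw [Finset.sum_eq_zero (fun j _ => by rw [h j, zero_mul])] at hc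
      rw [Pi.single_eq_same] at hc
      exact zero_ne_one hc
    have hTau : ∀ i, ∃ l, M i l ≠ 0 ∧ M i l ^ (k-1) = 1 ∧
        ∀ d : Fin n → ℂ, ∑ j, M i j * d j = M i l * d l := by
      intro i
      obtain ⟨l, hl⟩ := hex i
      refine ⟨l, hl, ?_, ?_⟩
      · rw [(hone i l hl).1]
        exact (hone i l hl).2
      · intro d
        rw [Finset.sum_eq_single l]
        · intro j _ hj
          rw [show M i j = 0 from by_contra fun h => hj (huniq i j l h hl), zero_mul]
        · intro h
          exact absurd (Finset.mem_univ l) h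
    choose τ hτ0 hτ1 hτ2 using hTau
    have hinj : Function.Injective τ := by
      intro i i' hii'
      by_contra hne
      obtain ⟨A, hA, hAeq⟩ := hψsurj (diagonal (Pi.single i 1)) (isDiag_diagonal _)
      rw [← hA.diagonal_diag, hψd] at hAeq
      have h1 := congrFun (congrFun hAeq i) i
      have h2 := congrFun (congrFun hAeq i') i'
      simp only [diagonal_apply_eq] at h1 h2
      rw [hτ2 i] at h1
      rw [hτ2 i'] at h2
      rw [Pi.single_eq_same] at h1
      rw [Pi.single_eq_of_ne (Ne.symm hne)] at h2
      have hd0 : A.diag (τ i') = 0 := by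
        rcases mul_eq_zero.mp h2 with h | h
        · exact absurd h (hτ0 i')
        · exact h
      rw [← hii'] at hd0
      rw [hd0, mul_zero] at h1
      exact zero_ne_one h1
    have hbij := Finite.injective_iff_bijective.mp hinj
    set σ : Equiv.Perm (Fin n) := Equiv.ofBijective τ hbij with hσ
    refine ⟨diagonal (fun j => M (σ.symm j) (τ (σ.symm j))), σ.permMatrix ℂ, σ,
      isDiag_diagonal _, ?_, rfl, ?_⟩
    · rw [diag_zpow _ (fun j => hτ0 (σ.symm j)) (k-1)]
      have h : (fun j => M (σ.symm j) (τ (σ.symm j)) ^ (k-1)) = fun _ => (1:ℂ) :=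
        funext fun j => hτ1 (σ.symm j)
      rw [h, diagonal_one]
    · intro A hA
      conv_lhs => rw [← hA.diagonal_diag]
      rw [hψd]
      conv_rhs => rw [← hA.diagonal_diag]
      rw [Matrix.mul_assoc (Equiv.Perm.permMatrix ℂ σ), diagonal_mul_diagonal, perm_conj]
      have hfun : (fun i => ∑ j, M i j * A.diag j)
          = fun i => M (σ.symm (σ i)) (τ (σ.symm (σ i))) * A.diag (σ i) := by
        funext i
        rw [Equiv.symm_apply_apply, hτ2 i]
        rfl
      rw [hfun]
  · -- backward direction
    rintro ⟨C, P, σ, hCdiag, hCk, rfl, hform⟩ A hAS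
    have hAdiag := hSdiag A hAS
    have ha0 : ∀ p, A.diag p ≠ 0 := hSentries A hAS
    have hCunit : IsUnit C.det := by
      rcases lt_or_ge (k-1) 0 with hneg | hpos
      · have hm : k - 1 = -(((k-1).natAbs : ℕ) : ℤ) := by omega
        rw [hm, Matrix.zpow_neg_natCast] at hCk
        by_contra h
        have hdet : ¬ IsUnit (C ^ (k-1).natAbs).det := by
          rw [det_pow]
          intro hh
          exact h (isUnit_pow_iff (by omega : (k-1).natAbs ≠ 0) |>.mp hh)
        rw [nonsing_inv_apply_not_isUnit _ hdet] at hCk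
        have := congrFun (congrFun hCk ⟨0, hn⟩) ⟨0, hn⟩
        simp [Matrix.one_apply] at this
      · have hm : k - 1 = (((k-1).toNat : ℕ) : ℤ) := by omega
        rw [hm, zpow_natCast] at hCk
        have hdet : IsUnit (C.det ^ (k-1).toNat) := by
          rw [← det_pow, hCk, det_one]
          exact isUnit_one
        exact isUnit_pow_iff (by omega : (k-1).toNat ≠ 0) |>.mp hdet
    have hc0 : ∀ p, C.diag p ≠ 0 := by
      intro p h0
      rw [← hCdiag.diagonal_diag, det_diagonal, isUnit_iff_ne_zero] at hCunit
      exact hCunit (Finset.prod_eq_zero (Finset.mem_univ p) h0)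
    have hck : ∀ p, C.diag p ^ (k-1) = 1 := by
      intro p
      have h := hCk
      rw [← hCdiag.diagonal_diag, diag_zpow _ hc0 (k-1)] at h
      have := congrFun (congrFun h p) p
      simpa using this
    have hAk : A ^ k = diagonal (fun p => A.diag p ^ k) := by
      conv_lhs => rw [← hAdiag.diagonal_diag]
      rw [diag_zpow _ ha0 k]
    have h1 : ψ (A ^ k) = diagonal (fun i => C.diag (σ i) * A.diag (σ i) ^ k) := by
      rw [hAk, hform _ (isDiag_diagonal _)]
      conv_lhs => rw [← hCdiag.diagonal_diag]
      rw [Matrix.mul_assoc (σ.permMatrix ℂ), diagonal_mul_diagonal, perm_conj]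
    have h2 : ψ A = diagonal (fun i => C.diag (σ i) * A.diag (σ i)) := by
      rw [hform A hAdiag]
      conv_lhs => rw [← hCdiag.diagonal_diag, ← hAdiag.diagonal_diag]
      rw [Matrix.mul_assoc (σ.permMatrix ℂ), diagonal_mul_diagonal, perm_conj]
    rw [h1, h2, diag_zpow _ (fun i => mul_ne_zero (hc0 (σ i)) (ha0 (σ i))) k]
    have hfun : (fun i => C.diag (σ i) * A.diag (σ i) ^ k)
        = fun p => (C.diag (σ p) * A.diag (σ p)) ^ k := by
      funext i
      rw [mul_zpow]
      have hc : C.diag (σ i) ^ k = C.diag (σ i) := by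
        rw [show k = (k-1) + 1 by ring, zpow_add₀ (hc0 (σ i)), hck, one_mul, zpow_one]
      rw [hc]
    rw [hfun]
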